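/- (Selection of good radii.) Fix N ≥ 1 and n ≥ 1. Let f_1, …, f_n : ℝ^N → [0,∞) be continuous, let α_1, …, α_n ∈ ℝ and C_1, …, C_n > 0 be constants, and for each i define g_i(r) := ∫_{S^{N−1}} f_i(rθ) dθ. Suppose that for every i and every R ≥ 1, ∫_{B_R \ B_{R/2}} f_i(x) dx ≤ C_i R^{N−α_i}. Then there exist a constant C > 0 and a sequence R_m ≥ 1 with R_m → ∞ such that g_i(R_m) ≤ C R_m^{−α_i} for all i ∈ {1,…,n} and all m. -/

import Mathlib

open MeasureTheory Metric Filter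
open scoped RealInnerProductSpace

/-- The Laplacian of `u : ℝ^N → ℝ`, the sum of the pure second partial derivatives
`∑ i, ∂²u/∂x_i²`. -/
noncomputable def lap {N : ℕ} (u : EuclideanSpace ℝ (Fin N) → ℝ)
    (x : EuclideanSpace ℝ (Fin N)) : ℝ :=
  ∑ i : Fin N, iteratedFDeriv ℝ 2 u x (fun _ => EuclideanSpace.single i 1)

/-- The bilaplacian `Δ²u = Δ(Δu)`. -/
noncomputable def bilap {N : ℕ} (u : EuclideanSpace ℝ (Fin N) → ℝ) :
    EuclideanSpace ℝ (Fin N) → ℝ :=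
  lap (lap u)

section AuxGoodRadii
open Set


abbrev Euc (N : ℕ) := EuclideanSpace ℝ (Fin N)

lemma annulus_polar (N : ℕ) (hN : 1 ≤ N) (f : Euc N → ℝ)
    (hf : Continuous f) (s t : ℝ) (hs : 0 < s) :
    ∫⁻ r in Set.Ioo s t, ENNReal.ofReal (r ^ (N - 1)) *
        ∫⁻ θ : sphere (0 : Euc N) 1,
          ENNReal.ofReal (f (r • (θ : Euc N)))
          ∂((volume : Measure (Euc N)).toSphere)
      ≤ ∫⁻ x in ball (0 : Euc N) t \ ball 0 s,
          ENNReal.ofReal (f x) := by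
  haveI : Nontrivial (Euc N) := ⟨⟨EuclideanSpace.single ⟨0, hN⟩ 1, 0, by
    intro h
    have := congrArg (fun v : Euc N => v ⟨0, hN⟩) h
    rw [show (0: Euc N) ⟨0,hN⟩ = (0:ℝ) from rfl] at this
    simp at this⟩⟩
  have hμtriv : True := trivial
  have hdim : Module.finrank ℝ (Euc N) = N := finrank_euclideanSpace_fin
  set g : (Euc N) → ENNReal := Set.indicator {y : (Euc N) | ‖y‖ ∈ Set.Ioo s t}
    (fun y => ENNReal.ofReal (f y)) with hg_def
  have hmeasS : MeasurableSet {y : (Euc N) | ‖y‖ ∈ Set.Ioo s t} :=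
    measurable_norm measurableSet_Ioo
  have hg : Measurable g := by
    apply Measurable.indicator _ hmeasS
    fun_prop
  have hΦ : Measurable (fun p : ℝ × sphere (0 : (Euc N)) 1 =>
      ENNReal.ofReal (f (p.1 • (p.2 : (Euc N))))) := by
    have hc : Continuous (fun p : ℝ × sphere (0 : (Euc N)) 1 => f (p.1 • (p.2 : (Euc N)))) := by
      fun_prop
    exact (ENNReal.continuous_ofReal.comp hc).measurable
  have hG : Measurable (fun r : ℝ => ∫⁻ θ : sphere (0 : (Euc N)) 1,
      ENNReal.ofReal (f (r • (θ : (Euc N)))) ∂(volume : Measure (Euc N)).toSphere) :=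
    Measurable.lintegral_prod_right' hΦ
  have hmp := Measure.measurePreserving_homeomorphUnitSphereProd (E := Euc N)
    (volume : Measure (Euc N))
  set F : sphere (0 : Euc N) 1 × Set.Ioi (0 : ℝ) → ENNReal :=
    fun p => g ((p.2 : ℝ) • (p.1 : Euc N)) with hF_def
  have hF : Measurable F := by
    apply hg.comp
    have : Continuous (fun p : sphere (0 : Euc N) 1 × Set.Ioi (0 : ℝ) =>
        (p.2 : ℝ) • (p.1 : Euc N)) := by fun_prop
    exact this.measurable
  have h1 : ∫⁻ x : ({0}ᶜ : Set (Euc N)), g (x : Euc N)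
        ∂((volume : Measure (Euc N)).comap Subtype.val)
      = ∫⁻ p, F p ∂((volume : Measure (Euc N)).toSphere.prod
          (Measure.volumeIoiPow (Module.finrank ℝ (Euc N) - 1))) := by
    rw [← hmp.lintegral_comp hF]
    refine lintegral_congr fun x => ?_
    have hx : ((((homeomorphUnitSphereProd (Euc N)) x).2 : ℝ) •
          ((((homeomorphUnitSphereProd (Euc N)) x).1 : sphere (0 : Euc N) 1)) : Euc N)
        = (x : Euc N) := by
      rw [← homeomorphUnitSphereProd_symm_apply_coe, Homeomorph.symm_apply_apply]
    simp only [hF_def]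
    rw [hx]
  -- right side bound
  have h2 : (∫⁻ x : ({0}ᶜ : Set (Euc N)), g (x : (Euc N)) ∂((volume : Measure (Euc N)).comap Subtype.val))
      ≤ ∫⁻ x in ball (0 : (Euc N)) t \ ball 0 s, ENNReal.ofReal (f x) ∂(volume : Measure (Euc N)) := by
    rw [lintegral_subtype_comap (measurableSet_singleton (0: Euc N)).compl]
    calc ∫⁻ x in ({0}ᶜ : Set (Euc N)), g x ∂(volume : Measure (Euc N)) ≤ ∫⁻ x, g x ∂(volume : Measure (Euc N)) := setLIntegral_le_lintegral _ _
      _ = ∫⁻ x in {y : (Euc N) | ‖y‖ ∈ Set.Ioo s t}, ENNReal.ofReal (f x) ∂(volume : Measure (Euc N)) :=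
          lintegral_indicator hmeasS _
      _ ≤ _ := by
          apply lintegral_mono_set
          intro x hx
          simp only [Set.mem_setOf_eq, Set.mem_Ioo] at hx
          constructor
          · simpa [mem_ball, dist_zero_right] using hx.2
          · simp only [mem_ball, dist_zero_right, not_lt]
            exact hx.1.le
  -- left side computation
  have h3 : (∫⁻ p, F p ∂((volume : Measure (Euc N)).toSphere.prod
          (Measure.volumeIoiPow (Module.finrank ℝ (Euc N) - 1))))
      = ∫⁻ r in Set.Ioo s t, ENNReal.ofReal (r ^ (N - 1)) *
          ∫⁻ θ : sphere (0 : Euc N) 1, ENNReal.ofReal (f (r • (θ : Euc N)))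
            ∂(volume : Measure (Euc N)).toSphere := by
    rw [lintegral_prod_symm F hF.aemeasurable]
    have hinner : ∀ r : Set.Ioi (0:ℝ),
        (∫⁻ θ : sphere (0 : Euc N) 1, F (θ, r) ∂(volume : Measure (Euc N)).toSphere)
        = Set.indicator (Set.Ioo s t)
            (fun ρ => ∫⁻ θ : sphere (0 : Euc N) 1, ENNReal.ofReal (f (ρ • (θ : Euc N)))
              ∂(volume : Measure (Euc N)).toSphere) r.1 := by
      intro r
      have hnorm : ∀ θ : sphere (0 : Euc N) 1, ‖(r : ℝ) • (θ : Euc N)‖ = (r : ℝ) := by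
        intro θ
        rw [norm_smul, Real.norm_eq_abs, abs_of_pos r.2,
          mem_sphere_zero_iff_norm.mp θ.2, mul_one]
      by_cases hr : (r : ℝ) ∈ Set.Ioo s t
      · rw [Set.indicator_of_mem hr]
        refine lintegral_congr fun θ => ?_
        simp only [hF_def, hg_def]
        rw [Set.indicator_of_mem]
        simpa [hnorm θ] using hr
      · rw [Set.indicator_of_notMem hr]
        have : ∀ θ : sphere (0 : Euc N) 1, F (θ, r) = 0 := by
          intro θ
          simp only [hF_def, hg_def]
          rw [Set.indicator_of_notMem]
          simpa [hnorm θ] using hr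
        simp only [this, lintegral_zero]
    calc (∫⁻ r : Set.Ioi (0:ℝ), (∫⁻ θ : sphere (0 : Euc N) 1, F (θ, r)
            ∂(volume : Measure (Euc N)).toSphere)
          ∂Measure.volumeIoiPow (Module.finrank ℝ (Euc N) - 1))
        = ∫⁻ r : Set.Ioi (0:ℝ), Set.indicator (Set.Ioo s t)
            (fun ρ => ∫⁻ θ : sphere (0 : Euc N) 1, ENNReal.ofReal (f (ρ • (θ : Euc N)))
              ∂(volume : Measure (Euc N)).toSphere) r.1
          ∂Measure.volumeIoiPow (Module.finrank ℝ (Euc N) - 1) :=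
          lintegral_congr hinner
      _ = ∫⁻ r : Set.Ioi (0:ℝ), ENNReal.ofReal ((r:ℝ) ^ (Module.finrank ℝ (Euc N) - 1)) *
            Set.indicator (Set.Ioo s t)
            (fun ρ => ∫⁻ θ : sphere (0 : Euc N) 1, ENNReal.ofReal (f (ρ • (θ : Euc N)))
              ∂(volume : Measure (Euc N)).toSphere) r.1
          ∂(Measure.comap Subtype.val volume) := by
          rw [Measure.volumeIoiPow, lintegral_withDensity_eq_lintegral_mul]
          · rfl
          · exact (measurable_subtype_coe.pow_const _).ennreal_ofReal
          · exact ((hG.indicator measurableSet_Ioo).comp measurable_subtype_coe)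
      _ = ∫⁻ r in Set.Ioi (0:ℝ), ENNReal.ofReal (r ^ (Module.finrank ℝ (Euc N) - 1)) *
            Set.indicator (Set.Ioo s t)
            (fun ρ => ∫⁻ θ : sphere (0 : Euc N) 1, ENNReal.ofReal (f (ρ • (θ : Euc N)))
              ∂(volume : Measure (Euc N)).toSphere) r ∂volume :=
          lintegral_subtype_comap measurableSet_Ioi
            (fun ρ => ENNReal.ofReal (ρ ^ (Module.finrank ℝ (Euc N) - 1)) *
              Set.indicator (Set.Ioo s t)
                (fun ρ' => ∫⁻ θ : sphere (0 : Euc N) 1, ENNReal.ofReal (f (ρ' • (θ : Euc N)))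
                  ∂(volume : Measure (Euc N)).toSphere) ρ)
      _ = ∫⁻ r in Set.Ioi (0:ℝ), Set.indicator (Set.Ioo s t)
            (fun ρ => ENNReal.ofReal (ρ ^ (Module.finrank ℝ (Euc N) - 1)) *
              ∫⁻ θ : sphere (0 : Euc N) 1, ENNReal.ofReal (f (ρ • (θ : Euc N)))
              ∂(volume : Measure (Euc N)).toSphere) r ∂volume := by
          refine lintegral_congr fun r => ?_
          by_cases hr : r ∈ Set.Ioo s t
          · rw [Set.indicator_of_mem hr, Set.indicator_of_mem hr]
          · rw [Set.indicator_of_notMem hr, Set.indicator_of_notMem hr, mul_zero]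
      _ = ∫⁻ r in Set.Ioo s t ∩ Set.Ioi (0:ℝ),
            ENNReal.ofReal (r ^ (Module.finrank ℝ (Euc N) - 1)) *
              ∫⁻ θ : sphere (0 : Euc N) 1, ENNReal.ofReal (f (r • (θ : Euc N)))
              ∂(volume : Measure (Euc N)).toSphere ∂volume := by
          rw [lintegral_indicator measurableSet_Ioo, Measure.restrict_restrict measurableSet_Ioo]
      _ = _ := by
          rw [show Set.Ioo s t ∩ Set.Ioi (0:ℝ) = Set.Ioo s t from Set.inter_eq_left.mpr (fun x hx => lt_trans hs hx.1), hdim]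
  calc _ = _ := h3.symm
    _ = _ := h1.symm
    _ ≤ _ := h2

lemma rpow_abs_bound {u : ℝ} (h1 : 1 ≤ u) (h2 : u ≤ 2) (b : ℝ) :
    u ^ b ≤ (2:ℝ) ^ |b| := by
  rcases le_or_gt 0 b with hb | hb
  · rw [abs_of_nonneg hb]
    exact Real.rpow_le_rpow (by linarith) h2 hb
  · calc u ^ b ≤ u ^ (0:ℝ) := Real.rpow_le_rpow_of_exponent_le h1 hb.le
      _ = 1 := Real.rpow_zero u
      _ = (2:ℝ) ^ (0:ℝ) := (Real.rpow_zero 2).symm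
      _ ≤ (2:ℝ) ^ |b| := Real.rpow_le_rpow_of_exponent_le one_le_two (abs_nonneg b)

lemma neg_rpow_compare {P R a : ℝ} (hP : 0 < P) (h1 : P ≤ R) (h2 : R ≤ 2*P) :
    P ^ (-a) ≤ (2:ℝ) ^ |a| * R ^ (-a) := by
  have hR : 0 < R := lt_of_lt_of_le hP h1
  have hu1 : 1 ≤ R / P := (one_le_div hP).mpr h1
  have hu2 : R / P ≤ 2 := (div_le_iff₀ hP).mpr (by linarith)
  have key := rpow_abs_bound hu1 hu2 a
  have hPa := (Real.rpow_pos_of_pos hP a).ne'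
  have hRa := (Real.rpow_pos_of_pos hR a).ne'
  have hid : P ^ (-a) = (R/P)^a * R^(-a) := by
    rw [Real.div_rpow hR.le hP.le, Real.rpow_neg hR.le, Real.rpow_neg hP.le]
    field_simp
  rw [hid]
  exact mul_le_mul_of_nonneg_right key (Real.rpow_nonneg hR.le _)

lemma two_rpow_mul (x y : ℝ) : (2:ℝ)^x * (2:ℝ)^y = (2:ℝ)^(x+y) :=
  (Real.rpow_add two_pos x y).symm

lemma lint_annulus_le (N : ℕ) (f : Euc N → ℝ) (hf : Continuous f)
    (hnn : ∀ x, 0 ≤ f x) (R B : ℝ)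
    (hb : (∫ x in ball (0 : Euc N) R \ ball 0 (R/2), f x) ≤ B) :
    (∫⁻ x in ball (0 : Euc N) R \ ball 0 (R/2), ENNReal.ofReal (f x)) ≤ ENNReal.ofReal B := by
  have hint : IntegrableOn f (ball (0 : Euc N) R \ ball 0 (R/2)) := by
    have h1 : IntegrableOn f (closedBall (0 : Euc N) R) :=
      (hf.continuousOn).integrableOn_compact (isCompact_closedBall _ _)
    exact h1.mono_set ((Set.diff_subset).trans ball_subset_closedBall)
  rw [← ofReal_integral_eq_lintegral_ofReal hint (ae_of_all _ hnn)]
  exact ENNReal.ofReal_le_ofReal hb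


end AuxGoodRadii

/-- **Selection of good radii.** Let `f_1, …, f_n : ℝ^N → [0,∞)` be continuous with
`∫_{B_R \ B_{R/2}} f_i ≤ C_i R^{N-α_i}` for all `R ≥ 1`. Then, with
`g_i(r) = ∫_{S^{N-1}} f_i(rθ) dθ`, there are `C > 0` and a sequence `R_m ≥ 1`,
`R_m → ∞`, such that `g_i(R_m) ≤ C R_m^{-α_i}` for every `i` and `m`. -/

theorem good_radii_selection (N n : ℕ) (hN : 1 ≤ N) (hn : 1 ≤ n)
    (f : Fin n → EuclideanSpace ℝ (Fin N) → ℝ)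
    (hf_cont : ∀ i, Continuous (f i)) (hf_nonneg : ∀ i x, 0 ≤ f i x)
    (a : Fin n → ℝ) (c : Fin n → ℝ) (hc : ∀ i, 0 < c i)
    (hbound : ∀ i, ∀ R ≥ (1 : ℝ),
      (∫ x in ball (0 : EuclideanSpace ℝ (Fin N)) R \ ball 0 (R / 2), f i x) ≤
        c i * R ^ ((N : ℝ) - a i)) :
    ∃ C > (0 : ℝ), ∃ Rm : ℕ → ℝ, (∀ m, 1 ≤ Rm m) ∧ Tendsto Rm atTop atTop ∧
      ∀ i m,
        (∫ θ : sphere (0 : EuclideanSpace ℝ (Fin N)) 1,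
            f i (Rm m • (θ : EuclideanSpace ℝ (Fin N)))
              ∂((volume : Measure (EuclideanSpace ℝ (Fin N))).toSphere)) ≤
          C * Rm m ^ (-(a i)) := by
  haveI : Nonempty (Fin n) := ⟨⟨0, hn⟩⟩
  set P : ℕ → ℝ := fun m => 2 ^ m with hP_def
  have hP1 : ∀ m, (1:ℝ) ≤ P m := fun m => one_le_pow₀ one_le_two
  have hP0 : ∀ m, (0:ℝ) < P m := fun m => lt_of_lt_of_le one_pos (hP1 m)
  set G : Fin n → ℝ → ENNReal := fun i r =>
    ∫⁻ θ : sphere (0 : Euc N) 1, ENNReal.ofReal (f i (r • (θ : Euc N)))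
      ∂(volume : Measure (Euc N)).toSphere with hG_def
  have hG : ∀ i, Measurable (G i) := by
    intro i
    have hcont : Continuous (fun p : ℝ × sphere (0 : Euc N) 1 => f i (p.1 • (p.2 : Euc N))) := by
      fun_prop
    have hm : Measurable (fun p : ℝ × sphere (0 : Euc N) 1 =>
        ENNReal.ofReal (f i (p.1 • (p.2 : Euc N)))) :=
      (ENNReal.continuous_ofReal.comp hcont).measurable
    simp only [hG_def]
    exact Measurable.lintegral_prod_right' hm
  set K : ℝ := ∑ i, (2:ℝ) ^ ((N:ℝ) - a i) with hK_def
  have hK : 0 < K :=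
    Finset.sum_pos (fun i _ => Real.rpow_pos_of_pos two_pos _) Finset.univ_nonempty
  have main : ∀ m : ℕ, ∃ r : ℝ, r ∈ Set.Ioo (P m) (2 * P m) ∧
      ∀ i, G i r ≤ ENNReal.ofReal (2 * K * c i * (P m) ^ (-(a i))) := by
    intro m
    set w : Fin n → ℝ := fun i => (P m)^(a i) / c i with hw_def
    have hw0 : ∀ i, 0 < w i := fun i => div_pos (Real.rpow_pos_of_pos (hP0 m) _) (hc i)
    have hPm : P m = (2:ℝ) ^ (m:ℝ) := (Real.rpow_natCast 2 m).symm
    have h2Pm : 2 * P m = (2:ℝ) ^ ((m:ℝ)+1) := by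
      rw [hPm, Real.rpow_add two_pos, Real.rpow_one]; ring
    have stepA : ∀ i, ENNReal.ofReal (w i) *
        (∫⁻ r in Set.Ioo (P m) (2*P m), G i r) ≤
        ENNReal.ofReal ((2:ℝ) ^ ((N:ℝ) - a i) * P m) := by
      intro i
      have hA1 : ENNReal.ofReal ((P m)^(N-1 : ℕ)) * (∫⁻ r in Set.Ioo (P m) (2*P m), G i r)
          ≤ ∫⁻ r in Set.Ioo (P m) (2*P m), ENNReal.ofReal (r^(N-1:ℕ)) * G i r := by
        rw [← lintegral_const_mul _ (hG i)]
        refine setLIntegral_mono ((measurable_id.pow_const _).ennreal_ofReal.mul (hG i)) ?_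
        intro r hr
        exact mul_le_mul_left (ENNReal.ofReal_le_ofReal
          (pow_le_pow_left₀ (hP0 m).le hr.1.le _)) _
      have hA2 : (∫⁻ r in Set.Ioo (P m) (2*P m), ENNReal.ofReal (r^(N-1:ℕ)) * G i r)
          ≤ ENNReal.ofReal (c i * (2 * P m) ^ ((N:ℝ) - a i)) := by
        refine (annulus_polar N hN (f i) (hf_cont i) (P m) (2*P m) (hP0 m)).trans ?_
        have h2P : (2 * P m) / 2 = P m := by ring
        have hb := lint_annulus_le N (f i) (hf_cont i) (hf_nonneg i) (2 * P m) _
          (hbound i (2 * P m) (by nlinarith [hP1 m]))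
        rw [h2P] at hb
        exact hb
      have hcomb := hA1.trans hA2
      have hid1 : w i * (c i * (2*P m)^((N:ℝ)-a i))
          = (P m)^(a i) * (2*P m)^((N:ℝ)-a i) := by
        have hci := (hc i).ne'
        rw [hw_def]
        field_simp
      have hid2 : (P m)^(a i) * (2*P m)^((N:ℝ)-a i)
          = ((2:ℝ)^((N:ℝ)-a i) * P m) * (P m)^(N-1:ℕ) := by
        rw [h2Pm, hPm, ← Real.rpow_natCast ((2:ℝ)^((m:ℝ))) (N-1),
          ← Real.rpow_mul two_pos.le, ← Real.rpow_mul two_pos.le,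
          ← Real.rpow_mul two_pos.le, two_rpow_mul, mul_assoc, two_rpow_mul, two_rpow_mul]
        congr 1
        rw [Nat.cast_sub hN]
        push_cast
        ring
      have hkey : ENNReal.ofReal (w i) * ENNReal.ofReal (c i * (2*P m)^((N:ℝ)-a i))
          = ENNReal.ofReal ((2:ℝ)^((N:ℝ)-a i) * P m) * ENNReal.ofReal ((P m)^(N-1:ℕ)) := by
        rw [← ENNReal.ofReal_mul (hw0 i).le, hid1, hid2,
          ← ENNReal.ofReal_mul (by positivity)]
      have hne0 : ENNReal.ofReal ((P m)^(N-1:ℕ)) ≠ 0 :=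
        (ENNReal.ofReal_pos.mpr (by positivity)).ne'
      have hnetop : ENNReal.ofReal ((P m)^(N-1:ℕ)) ≠ ⊤ := ENNReal.ofReal_ne_top
      apply (ENNReal.mul_le_mul_iff_left hne0 hnetop).mp
      calc (ENNReal.ofReal (w i) * ∫⁻ r in Set.Ioo (P m) (2*P m), G i r) *
            ENNReal.ofReal ((P m)^(N-1:ℕ))
          = ENNReal.ofReal (w i) * (ENNReal.ofReal ((P m)^(N-1:ℕ)) *
              ∫⁻ r in Set.Ioo (P m) (2*P m), G i r) := by ring
        _ ≤ ENNReal.ofReal (w i) * ENNReal.ofReal (c i * (2*P m)^((N:ℝ)-a i)) :=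
            mul_le_mul_right hcomb _
        _ = ENNReal.ofReal ((2:ℝ)^((N:ℝ)-a i) * P m) * ENNReal.ofReal ((P m)^(N-1:ℕ)) := hkey
    have hsum : (∫⁻ r in Set.Ioo (P m) (2*P m), ∑ i, ENNReal.ofReal (w i) * G i r)
        ≤ ENNReal.ofReal (K * P m) := by
      rw [lintegral_finsetSum _ (f := fun i r => ENNReal.ofReal (w i) * G i r) (fun i _ => measurable_const.mul (hG i))]
      calc ∑ i, ∫⁻ r in Set.Ioo (P m) (2*P m), ENNReal.ofReal (w i) * G i r
          = ∑ i, ENNReal.ofReal (w i) * ∫⁻ r in Set.Ioo (P m) (2*P m), G i r :=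
            Finset.sum_congr rfl fun i _ => lintegral_const_mul _ (hG i)
        _ ≤ ∑ i, ENNReal.ofReal ((2:ℝ)^((N:ℝ)-a i) * P m) :=
            Finset.sum_le_sum (fun i _ => stepA i)
        _ = ENNReal.ofReal (∑ i, (2:ℝ)^((N:ℝ)-a i) * P m) :=
            (ENNReal.ofReal_sum_of_nonneg (fun i _ => by positivity)).symm
        _ = ENNReal.ofReal (K * P m) := by rw [hK_def, Finset.sum_mul]
    by_contra hcon
    push_neg at hcon
    have hlb : ∀ r ∈ Set.Ioo (P m) (2*P m),
        ENNReal.ofReal (2*K) ≤ ∑ i, ENNReal.ofReal (w i) * G i r := by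
      intro r hr
      obtain ⟨i, hi⟩ := hcon r hr
      have hid : ENNReal.ofReal (w i) * ENNReal.ofReal (2*K*c i*(P m)^(-(a i)))
          = ENNReal.ofReal (2*K) := by
        rw [← ENNReal.ofReal_mul (hw0 i).le]
        congr 1
        have e : (P m)^(a i) * (P m)^(-(a i)) = 1 := by
          rw [← Real.rpow_add (hP0 m), add_neg_cancel, Real.rpow_zero]
        have e2 : w i * (2*K*c i*(P m)^(-(a i)))
            = 2*K * ((P m)^(a i) * (P m)^(-(a i))) := by
          have hci := (hc i).ne'
          rw [hw_def]
          field_simp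
        rw [e2, e, mul_one]
      have hterm : ENNReal.ofReal (2*K) ≤ ENNReal.ofReal (w i) * G i r := by
        rw [← hid]
        exact mul_le_mul_right hi.le _
      exact hterm.trans (Finset.single_le_sum
        (f := fun j => ENNReal.ofReal (w j) * G j r) (fun j _ => zero_le)
        (Finset.mem_univ i))
    have hge : ENNReal.ofReal (2*K) * volume (Set.Ioo (P m) (2*P m))
        ≤ ∫⁻ r in Set.Ioo (P m) (2*P m), ∑ i, ENNReal.ofReal (w i) * G i r := by
      rw [← setLIntegral_const]
      exact setLIntegral_mono
        (Finset.measurable_sum _ fun i _ => measurable_const.mul (hG i)) hlb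
    have hvol : volume (Set.Ioo (P m) (2*P m)) = ENNReal.ofReal (P m) := by
      rw [Real.volume_Ioo]
      congr 1
      ring
    have hlt : ENNReal.ofReal (K * P m) < ENNReal.ofReal (2*K) * ENNReal.ofReal (P m) := by
      rw [← ENNReal.ofReal_mul (by linarith)]
      refine (ENNReal.ofReal_lt_ofReal_iff ?_).mpr ?_
      · nlinarith [hK, hP0 m]
      · nlinarith [hK, hP0 m]
    rw [hvol] at hge
    exact absurd hsum (not_le.mpr (lt_of_lt_of_le hlt hge))
  choose Rm hmem hbd using main
  have hCpos : (0:ℝ) < (2*K) * ∑ i, c i * (2:ℝ)^|a i| :=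
    mul_pos (by linarith) (Finset.sum_pos
      (fun i _ => mul_pos (hc i) (Real.rpow_pos_of_pos two_pos _)) Finset.univ_nonempty)
  refine ⟨(2*K) * ∑ i, c i * (2:ℝ)^|a i|, hCpos, Rm, ?_, ?_, ?_⟩
  · exact fun m => le_trans (hP1 m) (hmem m).1.le
  · exact tendsto_atTop_mono (fun m => (hmem m).1.le)
      (tendsto_pow_atTop_atTop_of_one_lt one_lt_two)
  · intro i m
    have hR0 : 0 < Rm m := lt_of_le_of_lt (hP0 m).le (hmem m).1
    have heq : (∫ θ : sphere (0 : Euc N) 1, f i (Rm m • (θ : Euc N))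
          ∂(volume : Measure (Euc N)).toSphere) = (G i (Rm m)).toReal := by
      rw [hG_def]
      exact integral_eq_lintegral_of_nonneg_ae (ae_of_all _ (fun θ => hf_nonneg i _))
        ((((hf_cont i).comp (continuous_const.fun_smul continuous_subtype_val) : Continuous fun θ : sphere (0 : Euc N) 1 => f i (Rm m • (θ : Euc N)))).aestronglyMeasurable)
    rw [heq]
    have h1 : (G i (Rm m)).toReal ≤ 2 * K * c i * (P m) ^ (-(a i)) := by
      have := ENNReal.toReal_mono ENNReal.ofReal_ne_top (hbd m i)
      refine this.trans ?_
      rw [ENNReal.toReal_ofReal]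
      exact mul_nonneg (mul_nonneg (mul_nonneg two_pos.le hK.le) (hc i).le)
        (Real.rpow_nonneg (hP0 m).le _)
    refine h1.trans ?_
    have h2 : (P m) ^ (-(a i)) ≤ (2:ℝ) ^ |a i| * (Rm m) ^ (-(a i)) :=
      neg_rpow_compare (hP0 m) (hmem m).1.le (hmem m).2.le
    calc 2 * K * c i * (P m) ^ (-(a i))
        ≤ 2 * K * c i * ((2:ℝ) ^ |a i| * (Rm m) ^ (-(a i))) := by
          exact mul_le_mul_of_nonneg_left h2
            (mul_nonneg (mul_nonneg two_pos.le hK.le) (hc i).le)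
      _ = (2*K) * (c i * (2:ℝ)^|a i|) * (Rm m) ^ (-(a i)) := by ring
      _ ≤ (2*K) * (∑ j, c j * (2:ℝ)^|a j|) * (Rm m) ^ (-(a i)) := by
          apply mul_le_mul_of_nonneg_right _ (Real.rpow_nonneg hR0.le _)
          apply mul_le_mul_of_nonneg_left _ (by linarith : (0:ℝ) ≤ 2*K)
          exact Finset.single_le_sum (f := fun j => c j * (2:ℝ)^|a j|)
            (fun j _ => mul_nonneg (hc j).le (Real.rpow_nonneg two_pos.le _))
            (Finset.mem_univ i)
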